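/- For each fixed β ≥ 0 there exist constants M > 0 and δ₀ > 0 such that for all α, δ > 0 with δ·α ≥ M and δ ≤ δ₀ the following holds: let k > 0 satisfy k·(k·sinh(δk) − β·cosh(δk)) = α·(k·cosh(δk) − β·sinh(δk)) and let ψ(t) = C₀·((1+β/k)e^{k(t−δ)} + (1−β/k)e^{−k(t−δ)}) with C₀ > 0 chosen so that ∫₀^δ ψ(t)² dt = 1; then every continuously differentiable function f : [0,δ] → ℝ with ∫₀^δ f(t)ψ(t) dt = 0 satisfies ∫₀^δ f'(t)² dt − α·f(0)² − β·f(δ)² ≥ 0. -/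

import Mathlib

set_option maxHeartbeats 1600000

open Set MeasureTheory intervalIntegral
section helpers

lemma sinh_lt_mul_cosh {x : ℝ} (hx : 0 < x) : Real.sinh x < x * Real.cosh x := by
  have h : StrictMonoOn (fun y => y * Real.cosh y - Real.sinh y) (Set.Ici 0) := by
    apply strictMonoOn_of_deriv_pos (convex_Ici 0)
    · fun_prop
    · intro y hy
      rw [interior_Ici] at hy
      have hd : HasDerivAt (fun y => y * Real.cosh y - Real.sinh y) (y * Real.sinh y) y := by
        have := ((hasDerivAt_id y).mul (Real.hasDerivAt_cosh y)).sub (Real.hasDerivAt_sinh y)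
        refine this.congr_deriv ?_; simp
      rw [hd.deriv]
      exact mul_pos hy (Real.sinh_pos_iff.mpr hy)
  have := h (Set.self_mem_Ici) (Set.mem_Ici.mpr hx.le) hx
  simpa using this

lemma cont_ii {a b : ℝ} (hab : a ≤ b) {w : ℝ → ℝ} (hw : ContinuousOn w (Set.Icc a b)) :
    IntervalIntegrable w volume a b :=
  hw.intervalIntegrable_of_Icc hab

lemma cs_interval {a b : ℝ} (hab : a ≤ b) (u v : ℝ → ℝ)
    (hu : ContinuousOn u (Set.Icc a b)) (hv : ContinuousOn v (Set.Icc a b)) :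
    (∫ t in a..b, u t * v t) ^ 2 ≤ (∫ t in a..b, u t ^ 2) * (∫ t in a..b, v t ^ 2) := by
  set p := ∫ t in a..b, u t ^ 2 with hp
  set q := ∫ t in a..b, v t ^ 2 with hq
  set s := ∫ t in a..b, u t * v t with hs
  have iu2 : IntervalIntegrable (fun t => u t ^ 2) volume a b := cont_ii hab (by fun_prop)
  have iv2 : IntervalIntegrable (fun t => v t ^ 2) volume a b := cont_ii hab (by fun_prop)
  have iuv : IntervalIntegrable (fun t => u t * v t) volume a b := cont_ii hab (hu.mul hv)
  have key : ∀ lam : ℝ, 0 ≤ p - 2 * lam * s + lam ^ 2 * q := by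
    intro lam
    have h0 : 0 ≤ ∫ t in a..b, (u t - lam * v t) ^ 2 :=
      intervalIntegral.integral_nonneg hab (fun t _ => sq_nonneg _)
    have hexp : (∫ t in a..b, (u t - lam * v t) ^ 2)
        = p - 2 * lam * s + lam ^ 2 * q := by
      have : ∀ t, (u t - lam * v t) ^ 2
          = u t ^ 2 - (2 * lam) * (u t * v t) + lam ^ 2 * v t ^ 2 := by intro t; ring
      rw [hp, hq, hs]
      simp_rw [this]
      rw [intervalIntegral.integral_add (((iu2.sub (iuv.const_mul _)))) (iv2.const_mul _),
        intervalIntegral.integral_sub iu2 (iuv.const_mul _),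
        intervalIntegral.integral_const_mul, intervalIntegral.integral_const_mul]
    linarith [hexp ▸ h0]
  have hq0 : 0 ≤ q := intervalIntegral.integral_nonneg hab (fun t _ => sq_nonneg _)
  rcases eq_or_lt_of_le hq0 with h | h
  · have hs0 : s = 0 := by
      by_contra hne
      have h1 := key ((p + 1) / (2 * s))
      rw [← h] at h1
      have : p - 2 * ((p + 1) / (2 * s)) * s = -1 := by field_simp; ring
      nlinarith
    have hp0 : 0 ≤ p := intervalIntegral.integral_nonneg hab (fun t _ => sq_nonneg _)
    rw [hs0, ← h]; nlinarith
  · have h1 := key (s / q)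
    have : p - 2 * (s / q) * s + (s / q) ^ 2 * q = p - s ^ 2 / q := by field_simp; ring
    rw [this] at h1
    have := (div_le_iff₀ h).mp (by linarith : s ^ 2 / q ≤ p)
    linarith [this]

lemma numeric_key (α k q B A δ y z : ℝ) (hk : 0 < k) (hαk : α < k) (hα : 0 < α)
    (hq0 : 0 ≤ q) (hq : q ≤ 1/200) (hB1 : B ≤ 1) (hB : 399/400 ≤ B)
    (hA1 : 1 ≤ A) (hA : A ≤ 2) (hz0 : 0 < z) (hz : z ≤ 1) (hy : 101 ≤ y)
    (hδ : 0 < δ) (hq2 : q^2 * δ * k ≤ 1/400) :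
    α * (q^2*δ + 2*q*B/k*(y-1) + B^2/(2*k)*(y^2-1)) ≤ 3/4 * (q - A*z + B*y)^2 := by
  have hB0 : (0:ℝ) < B := by linarith
  have hy1 : (0:ℝ) ≤ y - 1 := by linarith
  have hy0 : (0:ℝ) ≤ y := by linarith
  have hyy : (0:ℝ) ≤ y^2 - 1 := by nlinarith
  have hB2 : B^2 ≤ 1 := by nlinarith
  have t1 : α * (q^2*δ) ≤ 1/400 := by
    nlinarith [mul_nonneg (mul_nonneg (sq_nonneg q) hδ.le) (sub_nonneg.mpr hαk.le)]
  have t2 : α * (2*q*B/k*(y-1)) ≤ 2*q*y := by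
    have hnn : 0 ≤ 2*q*B/k*(y-1) := by positivity
    have st1 : α * (2*q*B/k*(y-1)) ≤ k * (2*q*B/k*(y-1)) :=
      mul_le_mul_of_nonneg_right hαk.le hnn
    have st2 : k * (2*q*B/k*(y-1)) = 2*q*B*(y-1) := by
      field_simp
    rw [st2] at st1
    nlinarith [mul_nonneg (mul_nonneg hq0 hy1) (sub_nonneg.mpr hB1), hq0]
  have t3 : α * (B^2/(2*k)*(y^2-1)) ≤ y^2/2 := by
    have hnn : 0 ≤ B^2/(2*k)*(y^2-1) := by positivity
    have st1 : α * (B^2/(2*k)*(y^2-1)) ≤ k * (B^2/(2*k)*(y^2-1)) :=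
      mul_le_mul_of_nonneg_right hαk.le hnn
    have st2 : k * (B^2/(2*k)*(y^2-1)) = B^2*(y^2-1)/2 := by
      field_simp
    rw [st2] at st1
    nlinarith [mul_nonneg hyy (sub_nonneg.mpr hB2)]
  have hbase : (399/400)*y - 2 ≤ q - A*z + B*y := by
    nlinarith [mul_le_mul_of_nonneg_left hz (by linarith : (0:ℝ) ≤ A),
      mul_le_mul_of_nonneg_right hB hy0]
  have hbase0 : (0:ℝ) ≤ (399/400)*y - 2 := by linarith
  have hsq : ((399/400)*y - 2)^2 ≤ (q - A*z + B*y)^2 := by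
    have := pow_le_pow_left₀ hbase0 hbase 2
    simpa using this
  have t2y : 2*q*y ≤ y/100 := by nlinarith [mul_nonneg hy0 (sub_nonneg.mpr hq)]
  have final : 1/400 + y/100 + y^2/2 ≤ 3/4 * ((399/400)*y - 2)^2 := by
    nlinarith [sq_nonneg (y - 101)]
  have expand : α * (q^2*δ + 2*q*B/k*(y-1) + B^2/(2*k)*(y^2-1))
      = α*(q^2*δ) + α*(2*q*B/k*(y-1)) + α*(B^2/(2*k)*(y^2-1)) := by ring
  linarith


lemma arith_bd1 (β δ : ℝ) (hβ : 0 ≤ β) (hδ : 0 < δ) (h1 : δ*(4*(β+1)) ≤ 1) :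
    β * δ ≤ 1/4 := by
  nlinarith [mul_le_mul_of_nonneg_left h1 hβ, mul_nonneg hβ hδ.le]

lemma arith_bd2 (β δ α : ℝ) (hβ : 0 ≤ β) (hδ : 0 < δ) (hα : 0 < α)
    (h1 : δ*(4*(β+1)) ≤ 1) (hM : 100 ≤ δ*α) : 400*(β+1) ≤ α := by
  nlinarith [mul_le_mul_of_nonneg_left h1 hα.le,
    mul_le_mul_of_nonneg_right hM (by positivity : (0:ℝ) ≤ 4*(β+1))]

lemma arith_e6 (β k α δ : ℝ) (h : k ≤ β) (hβδ : β*δ ≤ 1/4)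
    (e5 : α + β < δ*(k^2 + α*β)) (hα : 0 < α) (hδ : 0 < δ) (hk : 0 < k)
    (hβ : 0 ≤ β) : False := by
  nlinarith [mul_le_mul_of_nonneg_right (mul_le_mul_of_nonneg_left h hδ.le) hk.le,
    mul_le_mul_of_nonneg_right hβδ hα.le, mul_le_mul_of_nonneg_right hβδ hk.le]

lemma arith_e7 (β k α : ℝ) (h : k ≤ α) (e6 : β < k)
    (e3 : k*(α+β) < k^2 + α*β) : False := by
  nlinarith [mul_nonneg (sub_nonneg.mpr h) (sub_nonneg.mpr e6.le)]

lemma arith_q2 (u v : ℝ) (hu0 : 0 ≤ u) (hu : u ≤ 1/4) (hv0 : 0 ≤ v)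
    (hv : v ≤ 1/400) : 4*u*v ≤ 1/400 := by nlinarith

end helpers

theorem robin_robin_form_nonneg_on_orthogonal_complement (β : ℝ) (hβ : 0 ≤ β) :
    ∃ M > (0:ℝ), ∃ δ₀ > (0:ℝ), ∀ α δ : ℝ, 0 < α → 0 < δ →
      M ≤ δ * α → δ ≤ δ₀ →
      ∀ k C₀ : ℝ, 0 < k →
        k * (k * Real.sinh (δ * k) - β * Real.cosh (δ * k)) =
          α * (k * Real.cosh (δ * k) - β * Real.sinh (δ * k)) →
        0 < C₀ →
        ∀ ψ : ℝ → ℝ,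
          ψ = (fun t => C₀ * ((1 + β / k) * Real.exp (k * (t - δ)) +
            (1 - β / k) * Real.exp (-(k * (t - δ))))) →
          (∫ t in (0:ℝ)..δ, ψ t ^ 2) = 1 →
          ∀ f : ℝ → ℝ, ContDiffOn ℝ 1 f (Set.Icc 0 δ) →
            (∫ t in (0:ℝ)..δ, f t * ψ t) = 0 →
            0 ≤ (∫ t in (0:ℝ)..δ, (derivWithin f (Set.Icc 0 δ) t) ^ 2)
              - α * f 0 ^ 2 - β * f δ ^ 2 := by
  refine ⟨100, by norm_num, 1/(4*(β+1)), by positivity, ?_⟩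
  intro α δ hα hδ hM hδ0 k C₀ hk hsec hC₀ ψ hψ hnorm f hf horth
  have hβ1 : (0:ℝ) < β + 1 := by linarith only [hβ]
  have h1 : δ * (4*(β+1)) ≤ 1 := by
    have := (le_div_iff₀ (show (0:ℝ) < 4*(β+1) by positivity)).mp hδ0
    linarith only [this]
  have hβδ : β * δ ≤ 1/4 := arith_bd1 β δ hβ hδ h1
  have hα400 : 400*(β+1) ≤ α := arith_bd2 β δ α hβ hδ hα h1 hM
  -- step 1 : k > α
  have hx : 0 < δ * k := mul_pos hδ hk
  have e1 : (k^2 + α*β) * Real.sinh (δ*k) = k*(α+β) * Real.cosh (δ*k) := by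
    linear_combination hsec
  have hch : 0 < Real.cosh (δ*k) := Real.cosh_pos _
  have hsh : 0 < Real.sinh (δ*k) := Real.sinh_pos_iff.mpr hx
  have e2 : Real.sinh (δ*k) < Real.cosh (δ*k) := Real.sinh_lt_cosh _
  have hkab : 0 < k*(α+β) := mul_pos hk (by linarith only [hα, hβ])
  have e3 : k*(α+β) < k^2 + α*β := by
    have h5 : k*(α+β)*Real.sinh (δ*k) < (k^2+α*β)*Real.sinh (δ*k) := by
      have h := mul_lt_mul_of_pos_left e2 hkab
      rw [← e1] at h
      exact h
    exact (mul_lt_mul_iff_of_pos_right hsh).mp h5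
  have e4 : Real.sinh (δ*k) < (δ*k)*Real.cosh (δ*k) := sinh_lt_mul_cosh hx
  have hk2ab : (0:ℝ) < k^2 + α*β := by
    have h1' : (0:ℝ) < k^2 := by positivity
    have h2' : (0:ℝ) ≤ α*β := mul_nonneg hα.le hβ
    linarith only [h1', h2']
  have e5 : α + β < δ*(k^2 + α*β) := by
    have h6 : (k^2+α*β)*Real.sinh (δ*k) < (k^2+α*β)*((δ*k)*Real.cosh (δ*k)) :=
      mul_lt_mul_of_pos_left e4 hk2ab
    rw [e1] at h6
    have h6' : (k*(α+β))*Real.cosh (δ*k) < ((k^2+α*β)*(δ*k))*Real.cosh (δ*k) := by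
      calc (k*(α+β))*Real.cosh (δ*k) = k*(α+β)*Real.cosh (δ*k) := by ring
        _ < (k^2+α*β)*((δ*k)*Real.cosh (δ*k)) := h6
        _ = ((k^2+α*β)*(δ*k))*Real.cosh (δ*k) := by ring
    have h7 : k*(α+β) < (k^2+α*β)*(δ*k) := (mul_lt_mul_iff_of_pos_right hch).mp h6'
    have h7' : (α+β)*k < (δ*(k^2+α*β))*k := by
      calc (α+β)*k = k*(α+β) := by ring
        _ < (k^2+α*β)*(δ*k) := h7
        _ = (δ*(k^2+α*β))*k := by ring
    exact (mul_lt_mul_iff_of_pos_right hk).mp h7'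
  have e6 : β < k := by
    by_contra h
    push_neg at h
    exact arith_e6 β k α δ h hβδ e5 hα hδ hk hβ
  have e7 : α < k := by
    by_contra h
    push_neg at h
    exact arith_e7 β k α h e6 e3
  -- constants
  have hβk : β/k ≤ 1/400 := by
    rw [div_le_iff₀ hk]; linarith only [hα400, e7, hβ]
  have hβk0 : 0 ≤ β/k := by positivity
  have hx100 : (100:ℝ) ≤ δ*k := by
    have := mul_lt_mul_of_pos_left e7 hδ
    linarith only [this, hM]
  set y := Real.exp (δ*k) with hydef
  set z := Real.exp (-(δ*k)) with hzdef
  have hy : (101:ℝ) ≤ y := by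
    have := Real.add_one_le_exp (δ*k); rw [hydef]; linarith only [this, hx100]
  have hz1 : z ≤ 1 := by
    rw [hzdef, Real.exp_le_one_iff]; linarith only [hx100]
  have hz0 : 0 < z := Real.exp_pos _
  set A := 1 + β/k with hAdef
  set B := 1 - β/k with hBdef
  have hA1 : 1 ≤ A := by rw [hAdef]; linarith only [hβk0]
  have hA2 : A ≤ 2 := by rw [hAdef]; linarith only [hβk]
  have hB399 : 399/400 ≤ B := by rw [hBdef]; linarith only [hβk]
  have hB1 : B ≤ 1 := by rw [hBdef]; linarith only [hβk0]
  have hA0 : 0 < A := lt_of_lt_of_le one_pos hA1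
  have hB0 : 0 < B := lt_of_lt_of_le (by norm_num) hB399
  have hψt : ∀ t, ψ t = C₀ * (A * Real.exp (k*(t-δ)) + B * Real.exp (-(k*(t-δ)))) := by
    intro t; rw [hψ]
  have hψpos : ∀ t, 0 < ψ t := by
    intro t; rw [hψt]
    exact mul_pos hC₀ (add_pos (mul_pos hA0 (Real.exp_pos _)) (mul_pos hB0 (Real.exp_pos _)))
  have hψcont : Continuous ψ := by rw [hψ]; fun_prop
  -- the antiderivative F
  set F : ℝ → ℝ := fun t => (C₀/k) * (A * Real.exp (k*(t-δ)) - B * Real.exp (-(k*(t-δ)))) with hFdef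
  have hF : ∀ t, HasDerivAt F (ψ t) t := by
    intro t
    have harg : HasDerivAt (fun t : ℝ => k*(t-δ)) k t := by
      simpa using ((hasDerivAt_id t).sub_const δ).const_mul k
    have h1e := harg.exp
    have h2e := harg.fun_neg.exp
    have hcomb := ((h1e.const_mul A).sub (h2e.const_mul B)).const_mul (C₀/k)
    rw [hFdef]
    refine hcomb.congr_deriv ?_
    rw [hψt]
    field_simp
    ring
  have hFd : Differentiable ℝ F := fun t => (hF t).differentiableAt
  have hFc : Continuous F := hFd.continuous
  have hFmono : StrictMono F := by
    apply strictMono_of_deriv_pos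
    intro t; rw [(hF t).deriv]; exact hψpos t
  set D := F δ - F 0 with hDdef
  have hD : 0 < D := sub_pos.mpr (hFmono hδ)
  -- f' facts
  set f' := derivWithin f (Set.Icc 0 δ) with hf'def
  have hfc : ContinuousOn f (Set.Icc 0 δ) := hf.continuousOn
  have hUD : UniqueDiffOn ℝ (Set.Icc (0:ℝ) δ) := uniqueDiffOn_Icc hδ
  have hf'c : ContinuousOn f' (Set.Icc 0 δ) := hf.continuousOn_derivWithin hUD le_rfl
  have hfd : ∀ t ∈ Set.Ioo (0:ℝ) δ, HasDerivAt f (f' t) t := by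
    intro t ht
    have h1' : DifferentiableWithinAt ℝ f (Set.Icc 0 δ) t :=
      (hf.differentiableOn one_ne_zero) t (Set.mem_Icc_of_Ioo ht)
    exact h1'.hasDerivWithinAt.hasDerivAt (Icc_mem_nhds ht.1 ht.2)
  -- integrability
  have contG : ContinuousOn (fun t => F δ - F t) (Set.Icc 0 δ) :=
    (continuous_const.sub hFc).continuousOn
  have contH : ContinuousOn (fun t => F t - F 0) (Set.Icc 0 δ) :=
    (hFc.sub continuous_const).continuousOn
  have if'G : IntervalIntegrable (fun t => f' t * (F δ - F t)) volume 0 δ :=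
    cont_ii hδ.le (hf'c.mul contG)
  have if'H : IntervalIntegrable (fun t => f' t * (F t - F 0)) volume 0 δ :=
    cont_ii hδ.le (hf'c.mul contH)
  have ifψ : IntervalIntegrable (fun t => f t * ψ t) volume 0 δ :=
    cont_ii hδ.le (hfc.mul hψcont.continuousOn)
  -- integration by parts identities
  have key1 : (∫ t in (0:ℝ)..δ, (f' t * (F δ - F t) - f t * ψ t))
      = f δ * (F δ - F δ) - f 0 * (F δ - F 0) := by
    have hres := intervalIntegral.integral_eq_sub_of_hasDerivAt_of_le (a := (0:ℝ)) (b := δ)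
      (f := fun t => f t * (F δ - F t)) (f' := fun t => f' t * (F δ - F t) - f t * ψ t)
      hδ.le (hfc.mul contG) ?_ (if'G.sub ifψ)
    · simpa using hres
    · intro t ht
      have hder := (hfd t ht).mul ((hF t).const_sub (F δ))
      refine hder.congr_deriv ?_; ring
  have I1 : (∫ t in (0:ℝ)..δ, f' t * (F δ - F t)) = -(f 0 * D) := by
    rw [intervalIntegral.integral_sub if'G ifψ, horth] at key1
    rw [hDdef]
    simp at key1 ⊢
    linarith only [key1]
  have key2 : (∫ t in (0:ℝ)..δ, (f' t * (F t - F 0) + f t * ψ t))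
      = f δ * (F δ - F 0) - f 0 * (F 0 - F 0) := by
    have hres := intervalIntegral.integral_eq_sub_of_hasDerivAt_of_le (a := (0:ℝ)) (b := δ)
      (f := fun t => f t * (F t - F 0)) (f' := fun t => f' t * (F t - F 0) + f t * ψ t)
      hδ.le (hfc.mul contH) ?_ (if'H.add ifψ)
    · simpa using hres
    · intro t ht
      have hder := (hfd t ht).mul ((hF t).sub_const (F 0))
      exact hder
  have I2 : (∫ t in (0:ℝ)..δ, f' t * (F t - F 0)) = f δ * D := by
    rw [intervalIntegral.integral_add if'H ifψ, horth] at key2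
    rw [hDdef]
    simp at key2 ⊢
    linarith only [key2]
  -- Cauchy-Schwarz
  set J := ∫ t in (0:ℝ)..δ, f' t ^ 2 with hJdef
  have hJ : 0 ≤ J := intervalIntegral.integral_nonneg hδ.le (fun t _ => sq_nonneg _)
  have cs1 := cs_interval hδ.le f' (fun t => F δ - F t) hf'c contG
  rw [I1] at cs1
  have cs1' : f 0 ^ 2 * D ^ 2 ≤ J * (∫ t in (0:ℝ)..δ, (F δ - F t) ^ 2) := by
    calc f 0 ^ 2 * D ^ 2 = (-(f 0 * D))^2 := by ring
    _ ≤ _ := cs1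
  have cs2 := cs_interval hδ.le f' (fun t => F t - F 0) hf'c contH
  rw [I2] at cs2
  have cs2' : f δ ^ 2 * D ^ 2 ≤ J * (∫ t in (0:ℝ)..δ, (F t - F 0) ^ 2) := by
    calc f δ ^ 2 * D ^ 2 = (f δ * D)^2 := by ring
    _ ≤ _ := cs2
  -- bound on ∫ H²
  have iH2 : IntervalIntegrable (fun t => (F t - F 0)^2) volume 0 δ :=
    cont_ii hδ.le (by fun_prop)
  have hHb : (∫ t in (0:ℝ)..δ, (F t - F 0) ^ 2) ≤ δ * D^2 := by
    have hpt : ∀ t ∈ Set.Icc (0:ℝ) δ, (F t - F 0)^2 ≤ D^2 := by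
      intro t ht
      have h0t : F 0 ≤ F t := hFmono.monotone ht.1
      have htδ : F t ≤ F δ := hFmono.monotone ht.2
      have h3 : (0:ℝ) ≤ F t - F 0 := by linarith only [h0t]
      have h2 : F t - F 0 ≤ D := by rw [hDdef]; linarith only [htδ]
      have := mul_self_le_mul_self h3 h2
      calc (F t - F 0)^2 = (F t - F 0) * (F t - F 0) := sq (F t - F 0) ▸ by ring
        _ ≤ D * D := this
        _ = D^2 := by ring
    have hmono := intervalIntegral.integral_mono_on hδ.le iH2
      intervalIntegrable_const hpt
    simpa using hmono
  have hHnn : (0:ℝ) ≤ ∫ t in (0:ℝ)..δ, (F t - F 0) ^ 2 :=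
    intervalIntegral.integral_nonneg hδ.le (fun t _ => sq_nonneg _)
  have HH : β * (∫ t in (0:ℝ)..δ, (F t - F 0) ^ 2) ≤ 1/4 * D^2 := by
    have h1'' := mul_le_mul_of_nonneg_left hHb hβ
    have e'' : β * (δ * D^2) = (β*δ) * D^2 := by ring
    have e''' := mul_le_mul_of_nonneg_right hβδ (sq_nonneg D)
    calc β * (∫ t in (0:ℝ)..δ, (F t - F 0) ^ 2) ≤ β * (δ * D^2) := h1''
      _ = (β*δ) * D^2 := e''
      _ ≤ 1/4 * D^2 := e'''
  -- bound on ∫ G²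
  have hFδ : F δ = (C₀/k) * (A - B) := by
    simp only [hFdef]; simp
  have hF0 : F 0 = (C₀/k) * (A * z - B * y) := by
    simp only [hFdef, hydef, hzdef]
    rw [show -(k*((0:ℝ)-δ)) = δ*k by ring, show k*((0:ℝ)-δ) = -(δ*k) by ring]
  have hDval : D = (C₀/k) * ((A - B) - A*z + B*y) := by
    rw [hDdef, hFδ, hF0]; ring
  set c := C₀/k with hcdef
  have hc : 0 < c := div_pos hC₀ hk
  -- pointwise bound on G
  have hGpt : ∀ t ∈ Set.Icc (0:ℝ) δ, (F δ - F t)^2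
      ≤ (c * ((A-B) + B * Real.exp (-(k*(t-δ)))))^2 := by
    intro t ht
    have hG0 : 0 ≤ F δ - F t := by linarith only [hFmono.monotone ht.2]
    have hGle : F δ - F t ≤ c * ((A-B) + B * Real.exp (-(k*(t-δ)))) := by
      rw [hFδ]; simp only [hFdef]
      have hAE : 0 ≤ A * Real.exp (k*(t-δ)) := by positivity
      have : c * (A - B) - c * (A * Real.exp (k*(t-δ)) - B * Real.exp (-(k*(t-δ))))
          = c * ((A-B) + B * Real.exp (-(k*(t-δ)))) - c * (A * Real.exp (k*(t-δ))) := by ring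
      simp only [hcdef] at this ⊢
      have hnn := mul_nonneg hc.le hAE
      simp only [hcdef] at hnn
      linarith only [this, hnn]
    have := pow_le_pow_left₀ hG0 hGle 2
    simpa using this
  -- FTC for the bound W
  set V : ℝ → ℝ := fun t => c^2 * ((A-B)^2*t - (2*(A-B)*B/k)*Real.exp (-(k*(t-δ)))
      - (B^2/(2*k))*(Real.exp (-(k*(t-δ))))^2) with hVdef
  have hV : ∀ t, HasDerivAt V ((c * ((A-B) + B * Real.exp (-(k*(t-δ)))))^2) t := by
    intro t
    have harg : HasDerivAt (fun t : ℝ => -(k*(t-δ))) (-k) t := by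
      simpa using (((hasDerivAt_id t).sub_const δ).const_mul k).fun_neg
    have h2e := harg.exp
    have hsq := h2e.pow 2
    have hlin : HasDerivAt (fun t : ℝ => (A-B)^2*t) ((A-B)^2) t := by
      simpa using (hasDerivAt_id t).const_mul ((A-B)^2)
    have hcomb := ((hlin.sub (h2e.const_mul (2*(A-B)*B/k))).sub
      (hsq.const_mul (B^2/(2*k)))).const_mul (c^2)
    rw [hVdef]
    refine hcomb.congr_deriv ?_
    field_simp
    ring
  have iG2 : IntervalIntegrable (fun t => (F δ - F t)^2) volume 0 δ :=
    cont_ii hδ.le (by fun_prop)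
  have iW : IntervalIntegrable (fun t => (c * ((A-B) + B * Real.exp (-(k*(t-δ)))))^2) volume 0 δ :=
    cont_ii hδ.le (by fun_prop)
  have hGW : (∫ t in (0:ℝ)..δ, (F δ - F t)^2)
      ≤ ∫ t in (0:ℝ)..δ, (c * ((A-B) + B * Real.exp (-(k*(t-δ)))))^2 :=
    intervalIntegral.integral_mono_on hδ.le iG2 iW hGpt
  have hWval : (∫ t in (0:ℝ)..δ, (c * ((A-B) + B * Real.exp (-(k*(t-δ)))))^2)
      = V δ - V 0 :=
    intervalIntegral.integral_eq_sub_of_hasDerivAt (fun t _ => hV t) iW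
  have hVD : V δ - V 0 = c^2 * ((A-B)^2*δ + (2*(A-B)*B/k)*(y-1) + (B^2/(2*k))*(y^2-1)) := by
    simp only [hVdef, hydef]
    rw [show -(k*((δ:ℝ)-δ)) = 0 by ring, show -(k*((0:ℝ)-δ)) = δ*k by ring]
    rw [Real.exp_zero]
    ring
  -- numeric key
  have hAB : A - B = 2*(β/k) := by rw [hAdef, hBdef]; ring
  have hq0' : 0 ≤ A - B := by rw [hAB]; positivity
  have hq' : A - B ≤ 1/200 := by rw [hAB]; linarith only [hβk]
  have hq2 : (A-B)^2 * δ * k ≤ 1/400 := by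
    have heq : (A-B)^2 * δ * k = 4*(β*δ)*(β/k) := by
      rw [hAB]; field_simp; ring
    rw [heq]
    exact arith_q2 (β*δ) (β/k) (mul_nonneg hβ hδ.le) hβδ hβk0 hβk
  have keynum := numeric_key α k (A-B) B A δ y z hk e7 hα hq0' hq' hB1 hB399 hA1 hA2 hz0 hz1 hy hδ hq2
  have GG : α * (∫ t in (0:ℝ)..δ, (F δ - F t) ^ 2) ≤ 3/4 * D^2 := by
    have step : α * (∫ t in (0:ℝ)..δ, (F δ - F t) ^ 2) ≤ α * (V δ - V 0) := by
      apply mul_le_mul_of_nonneg_left _ hα.le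
      rw [← hWval]; exact hGW
    have step2 : α * (V δ - V 0) ≤ 3/4 * D^2 := by
      rw [hVD, hDval]
      have hc2 : (0:ℝ) ≤ c^2 := sq_nonneg c
      calc α * (c^2 * ((A-B)^2*δ + (2*(A-B)*B/k)*(y-1) + (B^2/(2*k))*(y^2-1)))
          = c^2 * (α * ((A-B)^2*δ + 2*(A-B)*B/k*(y-1) + B^2/(2*k)*(y^2-1))) := by ring
        _ ≤ c^2 * (3/4 * ((A-B) - A*z + B*y)^2) := mul_le_mul_of_nonneg_left keynum hc2
        _ = 3/4 * (c * ((A-B) - A*z + B*y))^2 := by ring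
    linarith only [step, step2]
  -- combine
  have hGnn : (0:ℝ) ≤ ∫ t in (0:ℝ)..δ, (F δ - F t) ^ 2 :=
    intervalIntegral.integral_nonneg hδ.le (fun t _ => sq_nonneg _)
  have comb : (α * f 0 ^ 2 + β * f δ ^ 2) * D^2 ≤ J * D^2 := by
    have c1 : α * (f 0 ^ 2 * D ^ 2) ≤ α * (J * (∫ t in (0:ℝ)..δ, (F δ - F t) ^ 2)) :=
      mul_le_mul_of_nonneg_left cs1' hα.le
    have c2 : β * (f δ ^ 2 * D ^ 2) ≤ β * (J * (∫ t in (0:ℝ)..δ, (F t - F 0) ^ 2)) :=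
      mul_le_mul_of_nonneg_left cs2' hβ
    have c3 : J * (α * (∫ t in (0:ℝ)..δ, (F δ - F t) ^ 2)
        + β * (∫ t in (0:ℝ)..δ, (F t - F 0) ^ 2)) ≤ J * D^2 := by
      apply mul_le_mul_of_nonneg_left _ hJ
      exact le_trans (add_le_add GG HH) (le_of_eq (by ring))
    have e1' : α * (J * (∫ t in (0:ℝ)..δ, (F δ - F t) ^ 2))
        + β * (J * (∫ t in (0:ℝ)..δ, (F t - F 0) ^ 2))
        = J * (α * (∫ t in (0:ℝ)..δ, (F δ - F t) ^ 2)
        + β * (∫ t in (0:ℝ)..δ, (F t - F 0) ^ 2)) := by ring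
    have e2' : (α * f 0 ^ 2 + β * f δ ^ 2) * D^2
        = α * (f 0 ^ 2 * D ^ 2) + β * (f δ ^ 2 * D ^ 2) := by ring
    rw [e2']
    linarith only [c1, c2, c3, e1']
  have hfin : α * f 0 ^ 2 + β * f δ ^ 2 ≤ J :=
    le_of_mul_le_mul_right comb (by positivity : (0:ℝ) < D^2)
  linarith only [hfin]
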